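/- The element ⁽ᵐ⁾Ш_{1,n-1} of ℤG(m,1,n) satisfies the polynomial identity ∏_{i=0}^{n} (⁽ᵐ⁾Ш_{1,n-1} − i·m) = 0; in particular left multiplication by ⁽ᵐ⁾Ш_{1,n-1} is annihilated by the polynomial ∏_{i=0}^{n}(X − im). -/

import Mathlib

open Finset Multiplicative

/-- The cyclic group of order `m` (written multiplicatively). -/
abbrev Cm (m : ℕ) : Type := Multiplicative (ZMod m)

/-- The action of `S_n` on `(C_m)^n` permuting coordinates. -/
def wrAct (m n : ℕ) : Equiv.Perm (Fin n) →* MulAut (Fin n → Cm m) where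
  toFun σ :=
    { toFun := fun f => f ∘ σ.symm
      invFun := fun f => f ∘ σ
      left_inv := fun f => by ext i; simp
      right_inv := fun f => by ext i; simp
      map_mul' := fun f g => rfl }
  map_one' := by ext f i; rfl
  map_mul' := fun σ τ => by ext f i; rfl

/-- The wreath product `C_m ≀ S_n = (C_m)^n ⋊ S_n`, i.e. the group `G(m,1,n)`. -/
abbrev GG (m n : ℕ) := (Fin n → Cm m) ⋊[wrAct m n] Equiv.Perm (Fin n)

def ggEquiv (m n : ℕ) : GG m n ≃ (Fin n → Cm m) × Equiv.Perm (Fin n) where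
  toFun g := (g.left, g.right)
  invFun p := ⟨p.1, p.2⟩
  left_inv _ := rfl
  right_inv _ := rfl

instance (m n : ℕ) [NeZero m] : Fintype (GG m n) :=
  Fintype.ofEquiv _ (ggEquiv m n).symm

instance (m n : ℕ) : DecidableEq (GG m n) := (ggEquiv m n).decidableEq

/-- The generator `s_{i+1}` of `G(m,1,n)`: the simple transposition `(i+1, i+2)`
(0-indexed: `sGen m n i` swaps positions `i` and `i+1`). -/
def sGen (m n : ℕ) (i : ℕ) : GG m n :=
  if h : i + 1 < n then
    SemidirectProduct.inr (Equiv.swap ⟨i, Nat.lt_of_succ_lt h⟩ ⟨i + 1, h⟩) else 1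

/-- The generator `t_{i+1}` of `G(m,1,n)`, rotating the `(i+1)`-st card (0-indexed). -/
def tGen (m n : ℕ) (i : ℕ) : GG m n :=
  if h : i < n then
    SemidirectProduct.inl (Pi.mulSingle ⟨i, h⟩ (ofAdd (1 : ZMod m))) else 1

/-- `⁽ᵐ⁾Ш_{1,k-1} = (1 + s_{k-1} + s_{k-2}s_{k-1} + ⋯ + s_1⋯s_{k-1})(1 + t_k + ⋯ + t_k^{m-1})`,
viewed inside `ℤ G(m,1,n)` (case `k = n` is the 1-shuffle element of `G(m,1,n)` itself). -/
noncomputable def msha (m n k : ℕ) : MonoidAlgebra ℤ (GG m n) :=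
  (∑ l ∈ Finset.range k, MonoidAlgebra.of ℤ (GG m n)
      (((List.range l).map (fun p => sGen m n (k - 1 - l + p))).prod)) *
  (∑ a ∈ Finset.range m, MonoidAlgebra.of ℤ (GG m n) (tGen m n (k - 1) ^ a))




namespace ShuffleProof

variable {n : ℕ}

/-- The cycle on `Fin n` sending position `n-1` to `j` and shifting `j..n-2` up by one. -/
def cyc (j : Fin n) : Equiv.Perm (Fin n) where
  toFun x := if hx : x.val + 1 < n then (if j.val ≤ x.val then ⟨x.val + 1, hx⟩ else x) else j
  invFun y := if hy : j.val < y.val then ⟨y.val - 1, by have := y.isLt; omega⟩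
    else (if y.val < j.val then y else ⟨n - 1, by have := j.isLt; omega⟩)
  left_inv := by
    intro x
    have hj := j.isLt; have hx := x.isLt
    apply Fin.ext
    dsimp only
    beta_reduce
    by_cases h1 : x.val + 1 < n
    · rw [dif_pos h1]
      by_cases h2 : j.val ≤ x.val
      · rw [if_pos h2, dif_pos (show j.val < x.val + 1 by omega)]
        simp
      · rw [if_neg h2, dif_neg (show ¬ j.val < x.val by omega),
          if_pos (show x.val < j.val by omega)]
    · rw [dif_neg h1, dif_neg (lt_irrefl _), if_neg (lt_irrefl _)]
      show n - 1 = x.val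
      omega
  right_inv := by
    intro y
    have hj := j.isLt; have hy := y.isLt
    apply Fin.ext
    dsimp only
    beta_reduce
    by_cases h1 : j.val < y.val
    · rw [dif_pos h1, dif_pos (show (y.val - 1) + 1 < n by omega),
        if_pos (show j.val ≤ y.val - 1 by omega)]
      show y.val - 1 + 1 = y.val
      omega
    · rw [dif_neg h1]
      by_cases h2 : y.val < j.val
      · rw [if_pos h2, dif_pos (show y.val + 1 < n by omega), if_neg (show ¬ j.val ≤ y.val by omega)]
      · rw [if_neg h2, dif_neg (show ¬ (n:ℕ) - 1 + 1 < n by omega)]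
        omega

lemma cyc_apply_val (j x : Fin n) :
    (cyc j x).val = if x.val + 1 < n then (if j.val ≤ x.val then x.val + 1 else x.val)
      else j.val := by
  show ((if hx : x.val + 1 < n then (if j.val ≤ x.val then (⟨x.val + 1, hx⟩ : Fin n) else x) else j)).val = _
  by_cases h1 : x.val + 1 < n
  · rw [dif_pos h1, if_pos h1]
    by_cases h2 : j.val ≤ x.val
    · rw [if_pos h2, if_pos h2]
    · rw [if_neg h2, if_neg h2]
  · rw [dif_neg h1, if_neg h1]

lemma cyc_symm_val (j y : Fin n) :
    ((cyc j).symm y).val = if j.val < y.val then y.val - 1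
      else (if y.val < j.val then y.val else n - 1) := by
  show ((if hy : j.val < y.val then (⟨y.val - 1, by have := y.isLt; omega⟩ : Fin n)
    else (if y.val < j.val then y else ⟨n - 1, by have := j.isLt; omega⟩))).val = _
  by_cases h1 : j.val < y.val
  · rw [dif_pos h1, if_pos h1]
  · rw [dif_neg h1, if_neg h1]
    by_cases h2 : y.val < j.val
    · rw [if_pos h2, if_pos h2]
    · rw [if_neg h2, if_neg h2]

lemma cyc_last (hn : 0 < n) (j : Fin n) : cyc j ⟨n - 1, by omega⟩ = j := by
  apply Fin.ext
  rw [cyc_apply_val]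
  simp only [Fin.val_mk]
  rw [if_neg (by omega)]

lemma cyc_symm_self_val (j : Fin n) : ((cyc j).symm j).val = n - 1 := by
  rw [cyc_symm_val]; simp

lemma cyc_symm_lt_of_ne (j p : Fin n) (h : p ≠ j) : ((cyc j).symm p).val < n - 1 := by
  have hj := j.isLt; have hp := p.isLt
  have hne : p.val ≠ j.val := fun hh => h (Fin.ext hh)
  rw [cyc_symm_val]
  split_ifs <;> omega

lemma cyc_symm_lt_iff (j p q : Fin n) (hp : p ≠ j) (hq : q ≠ j) :
    ((cyc j).symm p).val < ((cyc j).symm q).val ↔ p.val < q.val := by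
  have hj := j.isLt; have hp' := p.isLt; have hq' := q.isLt
  have hne1 : p.val ≠ j.val := fun hh => hp (Fin.ext hh)
  have hne2 : q.val ≠ j.val := fun hh => hq (Fin.ext hh)
  rw [cyc_symm_val, cyc_symm_val]
  split_ifs <;> omega

lemma cyc_eq_one (hn : 0 < n) : cyc (⟨n - 1, by omega⟩ : Fin n) = 1 := by
  apply Equiv.ext
  intro x
  apply Fin.ext
  have hx := x.isLt
  rw [cyc_apply_val]
  simp only [Fin.val_mk, Equiv.Perm.coe_one, id_eq]
  split_ifs <;> omega

lemma swap_mul_cyc (j : ℕ) (h : j + 2 ≤ n) :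
    Equiv.swap (⟨j, by omega⟩ : Fin n) ⟨j + 1, by omega⟩ * cyc ⟨j + 1, by omega⟩
      = cyc ⟨j, by omega⟩ := by
  apply Equiv.ext
  intro x
  have hx := x.isLt
  apply Fin.ext
  rw [Equiv.Perm.mul_apply]
  rw [Equiv.swap_apply_def]
  simp only [Fin.ext_iff, cyc_apply_val, Fin.val_mk, apply_ite Fin.val]
  split_ifs <;> omega


open SemidirectProduct MonoidAlgebra

variable {m : ℕ}

lemma wrAct_apply (m n : ℕ) (τ : Equiv.Perm (Fin n)) (v : Fin n → Cm m) :
    wrAct m n τ v = v ∘ τ.symm := rfl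

/-- The group element `c_{l,a}`: move bottom card to position `n-1-l`, twisting by `a`. -/
def celt (m n : ℕ) (hn : 0 < n) (l a : ℕ) : GG m n :=
  ⟨Pi.mulSingle (⟨n - 1 - l, by omega⟩ : Fin n) (ofAdd (a : ZMod m)), cyc ⟨n - 1 - l, by omega⟩⟩

lemma celt_left (m n : ℕ) (hn : 0 < n) (l a : ℕ) :
    (celt m n hn l a).left = Pi.mulSingle (⟨n - 1 - l, by omega⟩ : Fin n) (ofAdd (a : ZMod m)) := rfl

lemma celt_right (m n : ℕ) (hn : 0 < n) (l a : ℕ) :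
    (celt m n hn l a).right = cyc ⟨n - 1 - l, by omega⟩ := rfl

lemma prod_sgen (m n : ℕ) (hn : 0 < n) :
    ∀ l, l < n →
      ((List.range l).map (fun p => sGen m n (n - 1 - l + p))).prod
        = SemidirectProduct.inr (φ := wrAct m n) (cyc ⟨n - 1 - l, by omega⟩) := by
  intro l
  induction l with
  | zero =>
    intro _
    simp only [List.range_zero, List.map_nil, List.prod_nil]
    rw [show (⟨n - 1 - 0, by omega⟩ : Fin n) = ⟨n - 1, by omega⟩ from Fin.mk_eq_mk.mpr (by omega)]
    rw [cyc_eq_one hn, map_one]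
  | succ l ih =>
    intro hl
    rw [List.range_succ_eq_map, List.map_cons, List.prod_cons, List.map_map]
    have harg : n - 1 - (l + 1) + 0 = n - 1 - (l + 1) := by omega
    have hfun : ((fun p => sGen m n (n - 1 - (l + 1) + p)) ∘ Nat.succ)
        = fun p => sGen m n (n - 1 - l + p) := by
      funext p
      simp only [Function.comp_apply]
      congr 1
      omega
    rw [hfun, ih (by omega)]
    rw [show sGen m n (n - 1 - (l + 1) + 0) = sGen m n (n - 2 - l) by congr 1; omega]
    rw [sGen, dif_pos (show n - 2 - l + 1 < n by omega)]
    rw [← map_mul]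
    congr 1
    have h2 : (n - 2 - l) + 2 ≤ n := by omega
    have e1 : (⟨n - 2 - l + 1, by omega⟩ : Fin n) = ⟨(n - 2 - l) + 1, by omega⟩ := rfl
    have e2 : (⟨n - 1 - l, by omega⟩ : Fin n) = ⟨(n - 2 - l) + 1, by omega⟩ := Fin.mk_eq_mk.mpr (by omega)
    rw [e2, swap_mul_cyc (n - 2 - l) h2]
    congr 1
    exact Fin.mk_eq_mk.mpr (by omega)

lemma tgen_pow (m n : ℕ) (hn : 0 < n) (a : ℕ) :
    tGen m n (n - 1) ^ a
      = SemidirectProduct.inl (φ := wrAct m n)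
          (Pi.mulSingle (⟨n - 1, by omega⟩ : Fin n) (ofAdd (a : ZMod m))) := by
  rw [tGen, dif_pos (show n - 1 < n by omega), ← map_pow, ← Pi.mulSingle_pow]
  congr 1
  rw [← ofAdd_nsmul]
  congr 1
  rw [nsmul_eq_mul, mul_one]

lemma inr_mul_inl (m n : ℕ) (π : Equiv.Perm (Fin n)) (v : Fin n → Cm m) :
    (SemidirectProduct.inr (φ := wrAct m n) π) * SemidirectProduct.inl v
      = ⟨wrAct m n π v, π⟩ := by
  apply SemidirectProduct.ext
  · rw [SemidirectProduct.mul_left]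
    simp
  · rw [SemidirectProduct.mul_right]
    simp

lemma msha_eq (m n : ℕ) (hn : 0 < n) :
    msha m n n = ∑ l ∈ Finset.range n, ∑ a ∈ Finset.range m,
      MonoidAlgebra.single (celt m n hn l a) (1 : ℤ) := by
  rw [msha, Finset.sum_mul_sum]
  refine Finset.sum_congr rfl (fun l hl => Finset.sum_congr rfl (fun a ha => ?_))
  rw [← map_mul]
  rw [prod_sgen m n hn l (Finset.mem_range.mp hl)]
  rw [tgen_pow m n hn a]
  rw [inr_mul_inl]
  rw [MonoidAlgebra.of_apply]
  congr 1
  apply SemidirectProduct.ext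
  · show wrAct m n (cyc ⟨n - 1 - l, by omega⟩) (Pi.mulSingle ⟨n - 1, by omega⟩ (ofAdd (a : ZMod m)))
      = (celt m n hn l a).left
    rw [wrAct_apply, celt_left]
    funext y
    simp only [Function.comp_apply]
    by_cases hy : y = (⟨n - 1 - l, by omega⟩ : Fin n)
    · subst hy
      rw [Pi.mulSingle_eq_same]
      have : (cyc (⟨n - 1 - l, by omega⟩ : Fin n)).symm ⟨n - 1 - l, by omega⟩
          = ⟨n - 1, by omega⟩ := by
        rw [Equiv.symm_apply_eq, cyc_last hn]
      rw [this, Pi.mulSingle_eq_same]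
    · rw [Pi.mulSingle_eq_of_ne hy]
      have : (cyc (⟨n - 1 - l, by omega⟩ : Fin n)).symm y ≠ ⟨n - 1, by omega⟩ := by
        intro hc
        apply hy
        have h2 := congrArg (cyc (⟨n - 1 - l, by omega⟩ : Fin n)) hc
        rw [Equiv.apply_symm_apply, cyc_last hn] at h2
        exact h2
      rw [Pi.mulSingle_eq_of_ne this]
  · rfl

/-- Membership predicate for `R_k`: the permutation is increasing on the first `n-k`
positions and the twists vanish there. -/
def PP (m n k : ℕ) (g : GG m n) : Prop :=
  (∀ i1 i2 : Fin n, i1.val < i2.val → i2.val < n - k → (g.right i1).val < (g.right i2).val) ∧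
  (∀ i : Fin n, i.val < n - k → g.left (g.right i) = 1)

instance (m n k : ℕ) : DecidablePred (PP m n k) := fun g => by
  unfold PP; exact instDecidableAnd

/-- The sum of the elements of `R_k` in the group algebra. -/
noncomputable def Sig (m n : ℕ) [NeZero m] (k : ℕ) : MonoidAlgebra ℤ (GG m n) :=
  ∑ g ∈ Finset.univ.filter (PP m n k), MonoidAlgebra.single g (1 : ℤ)

lemma Sig_apply (m n : ℕ) [NeZero m] (k : ℕ) (x : GG m n) :
    (Sig m n k).coeff x = if PP m n k x then 1 else 0 := by
  rw [Sig, MonoidAlgebra.coeff_sum, Finsupp.finset_sum_apply]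
  simp only [MonoidAlgebra.coeff_single]
  rw [Finset.sum_congr rfl (fun g _ => Finsupp.single_apply)]
  rw [Finset.sum_ite_eq' (Finset.univ.filter (PP m n k)) x (fun _ => (1 : ℤ))]
  simp [Finset.mem_filter]

lemma PP_celt (m n : ℕ) (hn : 0 < n) (k l a : ℕ) (g : GG m n) :
    PP m n k ((celt m n hn l a)⁻¹ * g) ↔
      ((∀ i1 i2 : Fin n, i1.val < i2.val → i2.val < n - k →
          ((cyc ⟨n - 1 - l, by omega⟩).symm (g.right i1)).val
            < ((cyc ⟨n - 1 - l, by omega⟩).symm (g.right i2)).val) ∧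
       (∀ i : Fin n, i.val < n - k →
          (Pi.mulSingle (⟨n - 1 - l, by omega⟩ : Fin n) (ofAdd (a : ZMod m)) : Fin n → Cm m)
              (g.right i)
            = g.left (g.right i))) := by
  have hr : ((celt m n hn l a)⁻¹ * g).right
      = ((cyc ⟨n - 1 - l, by omega⟩)⁻¹ * g.right : Equiv.Perm (Fin n)) := by
    rw [SemidirectProduct.mul_right, SemidirectProduct.inv_right, celt_right]
  have happ : ∀ i : Fin n, ((celt m n hn l a)⁻¹ * g).right i
      = (cyc ⟨n - 1 - l, by omega⟩).symm (g.right i) := by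
    intro i
    rw [hr, Equiv.Perm.mul_apply]
    rfl
  have hleft : ∀ i : Fin n,
      ((celt m n hn l a)⁻¹ * g).left (((celt m n hn l a)⁻¹ * g).right i)
        = ((celt m n hn l a).left (g.right i))⁻¹ * g.left (g.right i) := by
    intro i
    rw [SemidirectProduct.mul_left, SemidirectProduct.inv_left, SemidirectProduct.inv_right]
    rw [happ i]
    show ((wrAct m n (celt m n hn l a).right⁻¹) (celt m n hn l a).left⁻¹
        * (wrAct m n (celt m n hn l a).right⁻¹) g.left)
        ((cyc ⟨n - 1 - l, by omega⟩).symm (g.right i)) = _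
    rw [Pi.mul_apply, wrAct_apply, wrAct_apply]
    have hsymm : ((celt m n hn l a).right⁻¹ : Equiv.Perm (Fin n)).symm
        = (celt m n hn l a).right := by
      rw [← Equiv.Perm.inv_def, inv_inv]
    rw [hsymm]
    simp only [Function.comp_apply, celt_right]
    rw [Equiv.apply_symm_apply]
    rw [Pi.inv_apply]
  constructor
  · rintro ⟨h1, h2⟩
    constructor
    · intro i1 i2 hlt h2'
      have := h1 i1 i2 hlt h2'
      rwa [happ i1, happ i2] at this
    · intro i hi
      have := h2 i hi
      rw [hleft i] at this
      rw [celt_left] at this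
      exact (inv_mul_eq_one.mp this)
  · rintro ⟨h1, h2⟩
    constructor
    · intro i1 i2 hlt h2'
      rw [happ i1, happ i2]
      exact h1 i1 i2 hlt h2'
    · intro i hi
      rw [hleft i, celt_left]
      exact inv_mul_eq_one.mpr (h2 i hi)

lemma inner_sum (m n : ℕ) [NeZero m] (hn : 0 < n) (k : ℕ) (hk : k < n) (g : GG m n)
    (l : ℕ) :
    ∑ a ∈ Finset.range m, (if PP m n k ((celt m n hn l a)⁻¹ * g) then (1 : ℤ) else 0) =
      if n - k ≤ (g.right.symm ⟨n - 1 - l, by omega⟩).val then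
        (m : ℤ) * (if PP m n k g then 1 else 0)
      else if (g.right.symm ⟨n - 1 - l, by omega⟩).val = n - k - 1 then
        (if PP m n (k + 1) g then 1 else 0)
      else 0 := by
  set j : Fin n := (⟨n - 1 - l, by omega⟩ : Fin n) with hj
  set σ := g.right with hσ
  set i0 := σ.symm j with hi0
  have hσi0 : σ i0 = j := Equiv.apply_symm_apply σ j
  have heqi0 : ∀ i : Fin n, σ i = j → i = i0 := by
    intro i h
    rw [hi0, ← h, Equiv.symm_apply_apply]
  by_cases hA : n - k ≤ i0.val
  · -- Case A: free position, every a works iff g ∈ R_k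
    have hne : ∀ i : Fin n, i.val < n - k → σ i ≠ j := by
      intro i hi hc
      have := heqi0 i hc
      rw [this] at hi
      omega
    have hiff : ∀ a : ℕ, PP m n k ((celt m n hn l a)⁻¹ * g) ↔ PP m n k g := by
      intro a
      rw [PP_celt]
      constructor
      · rintro ⟨C1, C2⟩
        constructor
        · intro i1 i2 hlt h2
          exact (cyc_symm_lt_iff j (σ i1) (σ i2) (hne i1 (by omega)) (hne i2 h2)).mp
            (C1 i1 i2 hlt h2)
        · intro i hi
          have := C2 i hi
          rwa [Pi.mulSingle_eq_of_ne (hne i hi), eq_comm] at this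
      · rintro ⟨P1, P2⟩
        constructor
        · intro i1 i2 hlt h2
          exact (cyc_symm_lt_iff j (σ i1) (σ i2) (hne i1 (by omega)) (hne i2 h2)).mpr
            (P1 i1 i2 hlt h2)
        · intro i hi
          rw [Pi.mulSingle_eq_of_ne (hne i hi), eq_comm]
          exact P2 i hi
    rw [if_pos hA]
    rw [Finset.sum_congr rfl (fun a _ => by rw [if_congr (hiff a) rfl rfl])]
    rw [Finset.sum_const, Finset.card_range, nsmul_eq_mul]
  · rw [if_neg hA]
    by_cases hB : i0.val = n - k - 1
    · -- Case B: the tracked card n-k-1 sits at position j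
      rw [if_pos hB]
      have hiff : ∀ a : ℕ, PP m n k ((celt m n hn l a)⁻¹ * g) ↔
          (PP m n (k + 1) g ∧ ofAdd ((a : ℕ) : ZMod m) = g.left j) := by
        intro a
        rw [PP_celt]
        have hnei : ∀ i : Fin n, i.val < n - k - 1 → σ i ≠ j := by
          intro i hi hc
          have := heqi0 i hc
          rw [this] at hi
          omega
        constructor
        · rintro ⟨C1, C2⟩
          have hval : ∀ i : Fin n, i ≠ i0 → i.val ≠ i0.val :=
            fun i h hc => h (Fin.ext hc)
          refine ⟨⟨?_, ?_⟩, ?_⟩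
          · intro i1 i2 hlt h2
            have h2' : i2.val < n - k := by omega
            have := C1 i1 i2 hlt h2'
            exact (cyc_symm_lt_iff j (σ i1) (σ i2)
              (hnei i1 (by omega)) (hnei i2 (by omega))).mp this
          · intro i hi
            have := C2 i (by omega)
            rwa [Pi.mulSingle_eq_of_ne (hnei i (by omega)), eq_comm] at this
          · have := C2 i0 (by omega)
            rwa [hσi0, Pi.mulSingle_eq_same] at this
        · rintro ⟨⟨P1, P2⟩, ha⟩
          constructor
          · intro i1 i2 hlt h2
            by_cases hc : i2 = i0
            · have hσ2 : σ i2 = j := by rw [hc, hσi0]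
              have hne1 : σ i1 ≠ j := by
                apply hnei
                have : i2.val = i0.val := by rw [hc]
                omega
              rw [hσ2, cyc_symm_self_val]
              exact cyc_symm_lt_of_ne j (σ i1) hne1
            · have hc2 : i2.val ≠ i0.val := fun hcc => hc (Fin.ext hcc)
              have h2' : i2.val < n - k - 1 := by omega
              apply (cyc_symm_lt_iff j (σ i1) (σ i2)
                (hnei i1 (by omega)) (hnei i2 h2')).mpr
              exact P1 i1 i2 hlt (by omega)
          · intro i hi
            by_cases hc : i = i0
            · rw [hc, hσi0, Pi.mulSingle_eq_same, ha]
            · have hc2 : i.val ≠ i0.val := fun hcc => hc (Fin.ext hcc)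
              rw [Pi.mulSingle_eq_of_ne (hnei i (by omega)), eq_comm]
              exact P2 i (by omega)
      rw [Finset.sum_congr rfl (fun a _ => by rw [if_congr (hiff a) rfl rfl])]
      by_cases hP : PP m n (k + 1) g
      · rw [if_pos hP]
        have hcond : ∀ a ∈ Finset.range m,
            (if PP m n (k + 1) g ∧ ofAdd ((a : ℕ) : ZMod m) = g.left j then (1 : ℤ) else 0)
              = if a = (toAdd (g.left j)).val then 1 else 0 := by
          intro a ha
          have ham := Finset.mem_range.mp ha
          congr 1
          rw [eq_iff_iff]
          constructor
          · rintro ⟨-, h⟩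
            have : ((a : ℕ) : ZMod m) = toAdd (g.left j) := h
            rw [← this, ZMod.val_cast_of_lt ham]
          · intro h
            refine ⟨hP, ?_⟩
            rw [h]
            show ofAdd ((((toAdd (g.left j)).val : ℕ) : ZMod m)) = g.left j
            rw [ZMod.natCast_zmod_val]
            rfl
        rw [Finset.sum_congr rfl hcond]
        rw [Finset.sum_ite_eq' (Finset.range m) ((toAdd (g.left j)).val) (fun _ => (1 : ℤ))]
        rw [if_pos (Finset.mem_range.mpr (ZMod.val_lt _))]
      · rw [if_neg hP]
        rw [Finset.sum_congr rfl (fun a _ => by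
          rw [if_neg (fun hc : _ ∧ _ => hP hc.1)]), Finset.sum_const_zero]
    · -- Case C: tracked card strictly inside: impossible
      rw [if_neg hB]
      have hi0lt : i0.val < n - k - 1 := by omega
      have hnot : ∀ a : ℕ, ¬ PP m n k ((celt m n hn l a)⁻¹ * g) := by
        intro a hcon
        rw [PP_celt] at hcon
        have hi1 : i0.val + 1 < n := by omega
        set i2 : Fin n := ⟨i0.val + 1, hi1⟩ with hi2
        have hne2 : σ i2 ≠ j := by
          intro hc
          have := heqi0 i2 hc
          have : i2.val = i0.val := by rw [this]
          simp [hi2] at this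
        have := hcon.1 i0 i2 (by simp [hi2]) (by simp [hi2]; omega)
        rw [hσi0, cyc_symm_self_val] at this
        have h2 := cyc_symm_lt_of_ne j (σ i2) hne2
        omega
      rw [Finset.sum_congr rfl (fun a _ => by rw [if_neg (hnot a)]), Finset.sum_const_zero]

lemma range_split (N K : ℕ) (hK : K < N) (X Y : ℤ) :
    ∑ i ∈ Finset.range N, (if N - K ≤ i then X else if i = N - K - 1 then Y else 0)
      = (K : ℤ) * X + Y := by
  rw [Finset.range_eq_Ico,
    ← Finset.sum_Ico_consecutive _ (Nat.zero_le (N - K)) (by omega : N - K ≤ N)]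
  have h1 : ∑ i ∈ Finset.Ico 0 (N - K), (if N - K ≤ i then X else if i = N - K - 1 then Y else 0)
      = Y := by
    rw [Finset.sum_congr rfl (fun i hi => by
      rw [if_neg (by have := (Finset.mem_Ico.mp hi).2; omega)])]
    rw [Finset.sum_ite_eq' (Finset.Ico 0 (N - K)) (N - K - 1) (fun _ => Y)]
    rw [if_pos (Finset.mem_Ico.mpr ⟨Nat.zero_le _, by omega⟩)]
  have h2 : ∑ i ∈ Finset.Ico (N - K) N, (if N - K ≤ i then X else if i = N - K - 1 then Y else 0)
      = (K : ℤ) * X := by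
    rw [Finset.sum_congr rfl (fun i hi => by
      rw [if_pos (Finset.mem_Ico.mp hi).1])]
    rw [Finset.sum_const, Nat.card_Ico]
    rw [show N - (N - K) = K by omega]
    rw [nsmul_eq_mul]
  rw [h1, h2]
  ring

lemma count_lemma (m n : ℕ) [NeZero m] (hn : 0 < n) (k : ℕ) (hk : k < n) (g : GG m n) :
    ∑ l ∈ Finset.range n, ∑ a ∈ Finset.range m,
        (if PP m n k ((celt m n hn l a)⁻¹ * g) then (1 : ℤ) else 0)
      = (k : ℤ) * (m : ℤ) * (if PP m n k g then 1 else 0)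
          + (if PP m n (k + 1) g then 1 else 0) := by
  rw [Finset.sum_congr rfl (fun l _ => inner_sum m n hn k hk g l)]
  set F : Fin n → ℤ := fun j =>
    if n - k ≤ (g.right.symm j).val then (m : ℤ) * (if PP m n k g then 1 else 0)
    else if (g.right.symm j).val = n - k - 1 then (if PP m n (k + 1) g then 1 else 0)
    else 0 with hF
  have step1 : ∑ l ∈ Finset.range n,
      (if n - k ≤ (g.right.symm ⟨n - 1 - l, by omega⟩).val
        then (m : ℤ) * (if PP m n k g then 1 else 0)
        else if (g.right.symm ⟨n - 1 - l, by omega⟩).val = n - k - 1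
          then (if PP m n (k + 1) g then 1 else 0) else 0)
      = ∑ j : Fin n, F j := by
    apply Finset.sum_nbij' (i := fun l => (⟨n - 1 - l, by omega⟩ : Fin n))
      (j := fun x : Fin n => n - 1 - x.val)
    · intro a _
      exact Finset.mem_univ _
    · intro x _
      have := x.isLt
      exact Finset.mem_range.mpr (by omega)
    · intro a ha
      have := Finset.mem_range.mp ha
      simp only [Fin.val_mk]
      omega
    · intro x _
      have := x.isLt
      exact Fin.ext (by simp only [Fin.val_mk]; omega)
    · intro a _
      rfl
  rw [step1]
  have step2 : ∑ j : Fin n, F j = ∑ i : Fin n, F (g.right i) :=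
    (Equiv.sum_comp g.right F).symm
  rw [step2]
  have step3 : ∀ i : Fin n, F (g.right i)
      = (if n - k ≤ i.val then (m : ℤ) * (if PP m n k g then 1 else 0)
        else if i.val = n - k - 1 then (if PP m n (k + 1) g then 1 else 0) else 0) := by
    intro i
    rw [hF]
    simp only [Equiv.symm_apply_apply]
  rw [Finset.sum_congr rfl (fun i _ => step3 i)]
  rw [Fin.sum_univ_eq_sum_range (fun v =>
    (if n - k ≤ v then (m : ℤ) * (if PP m n k g then 1 else 0)
      else if v = n - k - 1 then (if PP m n (k + 1) g then 1 else 0) else 0))]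
  rw [range_split n k hk]
  ring

lemma step_lemma (m n : ℕ) [NeZero m] (hn : 0 < n) (k : ℕ) (hk : k < n) :
    msha m n n * Sig m n k
      = ((k * m : ℕ) : MonoidAlgebra ℤ (GG m n)) * Sig m n k + Sig m n (k + 1) := by
  refine MonoidAlgebra.ext (Finsupp.ext fun g => ?_)
  rw [msha_eq m n hn, Finset.sum_mul]
  rw [Finset.sum_congr rfl (fun l _ => Finset.sum_mul (Finset.range m) _ (Sig m n k))]
  simp only [MonoidAlgebra.coeff_sum, Finsupp.finset_sum_apply]
  have hterm : ∀ l a : ℕ,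
      ((MonoidAlgebra.single (celt m n hn l a) (1 : ℤ) * Sig m n k)).coeff g
        = (if PP m n k ((celt m n hn l a)⁻¹ * g) then (1 : ℤ) else 0) := by
    intro l a
    rw [MonoidAlgebra.coeff_single_mul_apply, Sig_apply, one_mul]
  rw [Finset.sum_congr rfl (fun l _ => Finset.sum_congr rfl (fun a _ => hterm l a))]
  rw [count_lemma m n hn k hk g]
  rw [MonoidAlgebra.coeff_add, Finsupp.add_apply, MonoidAlgebra.natCast_def, MonoidAlgebra.coeff_single_mul_apply,
    Sig_apply, Sig_apply, inv_one, one_mul]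
  push_cast
  ring

lemma PP_top (m n : ℕ) (g : GG m n) : PP m n n g := by
  constructor
  · intro i1 i2 _ h2
    omega
  · intro i hi
    exact absurd hi (by omega)

lemma top_lemma (m n : ℕ) [NeZero m] (hn : 0 < n) :
    msha m n n * Sig m n n = ((n * m : ℕ) : MonoidAlgebra ℤ (GG m n)) * Sig m n n := by
  refine MonoidAlgebra.ext (Finsupp.ext fun g => ?_)
  rw [msha_eq m n hn, Finset.sum_mul]
  rw [Finset.sum_congr rfl (fun l _ => Finset.sum_mul (Finset.range m) _ (Sig m n n))]
  simp only [MonoidAlgebra.coeff_sum, Finsupp.finset_sum_apply]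
  have hterm : ∀ l a : ℕ,
      ((MonoidAlgebra.single (celt m n hn l a) (1 : ℤ) * Sig m n n)).coeff g = 1 := by
    intro l a
    rw [MonoidAlgebra.coeff_single_mul_apply, Sig_apply, one_mul, if_pos (PP_top m n _)]
  rw [Finset.sum_congr rfl (fun l _ => Finset.sum_congr rfl (fun a _ => hterm l a))]
  rw [MonoidAlgebra.natCast_def, MonoidAlgebra.coeff_single_mul_apply, Sig_apply, inv_one, one_mul,
    if_pos (PP_top m n _)]
  rw [Finset.sum_congr rfl (fun l _ => Finset.sum_const (1 : ℤ)), Finset.sum_const]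
  simp only [Finset.card_range, nsmul_eq_mul, mul_one]
  push_cast
  ring

lemma Sig_zero (m n : ℕ) [NeZero m] : Sig m n 0 = 1 := by
  have hfilt : Finset.univ.filter (PP m n 0) = {(1 : GG m n)} := by
    apply Finset.ext
    intro g
    simp only [Finset.mem_filter, Finset.mem_univ, true_and, Finset.mem_singleton]
    constructor
    · rintro ⟨h1, h2⟩
      have hmono : StrictMono g.right := by
        intro i1 i2 hlt
        have := h1 i1 i2 (by exact hlt) (by have := i2.isLt; omega)
        exact this
      have hone : g.right = 1 := by
        have he := Subsingleton.elim
          ({ toEquiv := g.right, map_rel_iff' := fun {a b} => hmono.le_iff_le } :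
            Fin n ≃o Fin n) (OrderIso.refl (Fin n))
        apply Equiv.ext
        intro x
        have hx := congrArg (fun f : Fin n ≃o Fin n => f x) he
        simpa using hx
      have hleft : g.left = 1 := by
        funext i
        have := h2 (g.right.symm i) (by have := (g.right.symm i).isLt; omega)
        rwa [Equiv.apply_symm_apply] at this
      apply SemidirectProduct.ext
      · rw [hleft, SemidirectProduct.one_left]
      · rw [hone, SemidirectProduct.one_right]
    · rintro rfl
      constructor
      · intro i1 i2 hlt _
        rw [SemidirectProduct.one_right]
        exact hlt
      · intro i _
        rw [SemidirectProduct.one_left]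
        rfl
  rw [Sig, hfilt, Finset.sum_singleton, MonoidAlgebra.one_def]

lemma partial_prod (m n : ℕ) [NeZero m] (hn : 0 < n) :
    ∀ k, k ≤ n →
      ((List.range k).map
        (fun i => msha m n n - ((i * m : ℕ) : MonoidAlgebra ℤ (GG m n)))).prod = Sig m n k := by
  intro k
  induction k with
  | zero =>
    intro _
    simp [Sig_zero m n]
  | succ k ih =>
    intro hk1
    have hk : k < n := by omega
    rw [List.range_succ, List.map_append, List.prod_append, List.map_cons, List.map_nil,
      List.prod_cons, List.prod_nil, mul_one]
    rw [ih (by omega)]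
    have hcomm : Commute (msha m n n) (Sig m n k) := by
      rw [← ih (by omega)]
      apply Commute.list_prod_right
      intro x hx
      rw [List.mem_map] at hx
      obtain ⟨i, -, rfl⟩ := hx
      exact (Commute.refl _).sub_right (Nat.commute_cast _ _)
    rw [mul_sub, ← hcomm.eq, step_lemma m n hn k hk, (Nat.commute_cast (Sig m n k) (k * m)).eq]
    rw [add_sub_cancel_left]

end ShuffleProof


/-- The element `⁽ᵐ⁾Ш_{1,n-1}` of `ℤ G(m,1,n)` satisfies the polynomial
identity `∏_{i=0}^{n} (⁽ᵐ⁾Ш_{1,n-1} − i·m) = 0`; in particular, left multiplication by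
`⁽ᵐ⁾Ш_{1,n-1}` is annihilated by the polynomial `∏_{i=0}^{n} (X − im)`. -/
theorem prod_msha_sub_eq_zero (m n : ℕ) :
    (((List.range (n + 1)).map
        (fun i => msha m n n - ((i * m : ℕ) : MonoidAlgebra ℤ (GG m n)))).prod) = 0 := by
  rcases Nat.eq_zero_or_pos n with hn | hn
  · subst hn
    have hmz : msha m 0 0 = 0 := by
      rw [msha, Finset.range_zero, Finset.sum_empty, zero_mul]
    rw [show List.range 1 = [0] from rfl, List.map_cons, List.map_nil, List.prod_cons,
      List.prod_nil, mul_one, hmz]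
    simp
  rcases Nat.eq_zero_or_pos m with hm | hm
  · subst hm
    have hmz : msha 0 n n = 0 := by
      rw [msha, Finset.range_zero, Finset.sum_empty, mul_zero]
    rw [List.range_succ_eq_map, List.map_cons, List.prod_cons]
    rw [show msha 0 n n - ((0 * 0 : ℕ) : MonoidAlgebra ℤ (GG 0 n)) = 0 by
      rw [hmz]; simp]
    rw [zero_mul]
  haveI : NeZero m := ⟨by omega⟩
  rw [List.range_succ, List.map_append, List.prod_append, List.map_cons, List.map_nil,
    List.prod_cons, List.prod_nil, mul_one]
  rw [ShuffleProof.partial_prod m n hn n le_rfl]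
  have hcomm : Commute (msha m n n) (ShuffleProof.Sig m n n) := by
    rw [← ShuffleProof.partial_prod m n hn n le_rfl]
    apply Commute.list_prod_right
    intro x hx
    rw [List.mem_map] at hx
    obtain ⟨i, -, rfl⟩ := hx
    exact (Commute.refl _).sub_right (Nat.commute_cast _ _)
  rw [mul_sub, ← hcomm.eq, ShuffleProof.top_lemma m n hn,
    (Nat.commute_cast (ShuffleProof.Sig m n n) (n * m)).eq]
  rw [sub_self]
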